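/- Let p₁, p₂, q₁, q₂ be continuous real-valued functions on [a,b] with p₁(t) ≥ p₂(t) > 0 and q₁(t) ≤ q₂(t) for all t. Let φ₁ be a nontrivial solution of (p₁φ')' + q₁φ = 0 with consecutive zeros t₁ < t₂ in [a,b]. Then every nontrivial solution φ₂ of (p₂φ')' + q₂φ = 0 has at least one zero in the closed interval [t₁, t₂]. -/

import Mathlib

open Set Filter Topology

/-- Sturm comparison theorem: if `p₁ ≥ p₂ > 0` and `q₁ ≤ q₂` on `[a,b]`, and a nontrivial
solution `φ₁` of `(p₁ φ')' + q₁ φ = 0` has consecutive zeros `t₁ < t₂` in `[a,b]`, then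
every nontrivial solution `φ₂` of `(p₂ φ')' + q₂ φ = 0` has a zero in `[t₁, t₂]`. -/
theorem sturm_comparison
    (a b : ℝ) (hab : a < b)
    (p₁ p₂ q₁ q₂ : ℝ → ℝ)
    (hp₁ : ContinuousOn p₁ (Icc a b)) (hp₂ : ContinuousOn p₂ (Icc a b))
    (hq₁ : ContinuousOn q₁ (Icc a b)) (hq₂ : ContinuousOn q₂ (Icc a b))
    (hpq : ∀ t ∈ Icc a b, p₁ t ≥ p₂ t ∧ p₂ t > 0 ∧ q₁ t ≤ q₂ t)
    (φ₁ φ₁' φ₂ φ₂' : ℝ → ℝ)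
    (hφ₁d : ∀ t ∈ Icc a b, HasDerivAt φ₁ (φ₁' t) t)
    (hφ₁eq : ∀ t ∈ Icc a b, HasDerivAt (fun s => p₁ s * φ₁' s) (-(q₁ t * φ₁ t)) t)
    (hφ₁nt : ∃ t ∈ Icc a b, φ₁ t ≠ 0 ∨ φ₁' t ≠ 0)
    (hφ₂d : ∀ t ∈ Icc a b, HasDerivAt φ₂ (φ₂' t) t)
    (hφ₂eq : ∀ t ∈ Icc a b, HasDerivAt (fun s => p₂ s * φ₂' s) (-(q₂ t * φ₂ t)) t)
    (hφ₂nt : ∃ t ∈ Icc a b, φ₂ t ≠ 0 ∨ φ₂' t ≠ 0)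
    (t₁ t₂ : ℝ) (ht₁ : t₁ ∈ Icc a b) (ht₂ : t₂ ∈ Icc a b) (h₁₂ : t₁ < t₂)
    (hz₁ : φ₁ t₁ = 0) (hz₂ : φ₁ t₂ = 0)
    (hconsec : ∀ t ∈ Ioo t₁ t₂, φ₁ t ≠ 0) :
    ∃ s ∈ Icc t₁ t₂, φ₂ s = 0 := by
  by_contra hcon
  push_neg at hcon
  have hsub : Icc t₁ t₂ ⊆ Icc a b := Icc_subset_Icc ht₁.1 ht₂.2
  set z : ℝ → ℝ := fun t => p₁ t * φ₁' t * φ₁ t - p₂ t * φ₂' t * (φ₁ t ^ 2 / φ₂ t) with hzdef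
  set g : ℝ → ℝ := fun t => (q₂ t - q₁ t) * φ₁ t ^ 2 + (p₁ t - p₂ t) * φ₁' t ^ 2
      + p₂ t * (φ₁' t - φ₂' t * φ₁ t / φ₂ t) ^ 2 with hgdef
  -- Picone identity: z' = g on [t₁, t₂]
  have hzderiv : ∀ t ∈ Icc t₁ t₂, HasDerivAt z (g t) t := by
    intro t ht
    have hta : t ∈ Icc a b := hsub ht
    have hv : φ₂ t ≠ 0 := hcon t ht
    have h1 := (hφ₁eq t hta).mul (hφ₁d t hta)
    have hsq : HasDerivAt (fun s => φ₁ s ^ 2) (2 * φ₁ t ^ 1 * φ₁' t) t := by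
      simpa using (hφ₁d t hta).fun_pow 2
    have h2 : HasDerivAt (fun s => φ₁ s ^ 2 / φ₂ s)
        ((2 * φ₁ t ^ 1 * φ₁' t * φ₂ t - φ₁ t ^ 2 * φ₂' t) / φ₂ t ^ 2) t :=
      hsq.div (hφ₂d t hta) hv
    have h3 := (hφ₂eq t hta).mul h2
    have h4 := h1.sub h3
    have key : g t = -(q₁ t * φ₁ t) * φ₁ t + p₁ t * φ₁' t * φ₁' t -
        (-(q₂ t * φ₂ t) * (φ₁ t ^ 2 / φ₂ t) +
          p₂ t * φ₂' t * ((2 * φ₁ t ^ 1 * φ₁' t * φ₂ t - φ₁ t ^ 2 * φ₂' t) / φ₂ t ^ 2)) := by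
      simp only [hgdef]
      field_simp
      ring
    rw [key]
    exact h4
  have hzcont : ContinuousOn z (Icc t₁ t₂) :=
    fun t ht => ((hzderiv t ht).continuousAt).continuousWithinAt
  have hmono : MonotoneOn z (Icc t₁ t₂) := by
    apply monotoneOn_of_deriv_nonneg (convex_Icc _ _) hzcont
    · intro x hx
      rw [interior_Icc] at hx
      exact (hzderiv x (Ioo_subset_Icc_self hx)).differentiableAt.differentiableWithinAt
    · intro x hx
      rw [interior_Icc] at hx
      rw [(hzderiv x (Ioo_subset_Icc_self hx)).deriv]
      have hxab : x ∈ Icc a b := hsub (Ioo_subset_Icc_self hx)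
      obtain ⟨h1, h2, h3⟩ := hpq x hxab
      have := sq_nonneg (φ₁ x)
      have := sq_nonneg (φ₁' x)
      have := sq_nonneg (φ₁' x - φ₂' x * φ₁ x / φ₂ x)
      simp only [hgdef]
      nlinarith
  have hz1 : z t₁ = 0 := by simp [hzdef, hz₁]
  have hz2 : z t₂ = 0 := by simp [hzdef, hz₂]
  have hzero : ∀ t ∈ Icc t₁ t₂, z t = 0 := by
    intro t ht
    have hle := hmono ht (right_mem_Icc.2 h₁₂.le) ht.2
    have hge := hmono (left_mem_Icc.2 h₁₂.le) ht ht.1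
    rw [hz1] at hge; rw [hz2] at hle; linarith
  -- hence g = 0 in the interior, so the Wronskian-type term vanishes
  have hr : ∀ x ∈ Ioo t₁ t₂, φ₁' x * φ₂ x - φ₂' x * φ₁ x = 0 := by
    intro x hx
    have hxab : x ∈ Icc a b := hsub (Ioo_subset_Icc_self hx)
    have hv : φ₂ x ≠ 0 := hcon x (Ioo_subset_Icc_self hx)
    have h0 : HasDerivAt z 0 x := by
      have heq : z =ᶠ[𝓝 x] fun _ => (0 : ℝ) := by
        filter_upwards [Ioo_mem_nhds hx.1 hx.2] with y hy
        exact hzero y (Ioo_subset_Icc_self hy)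
      exact (hasDerivAt_const x (0 : ℝ)).congr_of_eventuallyEq heq
    have hg0 : g x = 0 := (hzderiv x (Ioo_subset_Icc_self hx)).unique h0
    obtain ⟨h1, h2, h3⟩ := hpq x hxab
    have hs1 := sq_nonneg (φ₁ x)
    have hs2 := sq_nonneg (φ₁' x)
    have hs3 := sq_nonneg (φ₁' x - φ₂' x * φ₁ x / φ₂ x)
    simp only [hgdef] at hg0
    have hr2 : (φ₁' x - φ₂' x * φ₁ x / φ₂ x) ^ 2 = 0 := by nlinarith
    have hr0 : φ₁' x - φ₂' x * φ₁ x / φ₂ x = 0 := by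
      exact pow_eq_zero_iff (two_ne_zero) |>.mp hr2
    field_simp at hr0
    linarith
  -- so φ₁/φ₂ has zero derivative on the open interval
  set w : ℝ → ℝ := fun t => φ₁ t / φ₂ t with hwdef
  have hw : ∀ x ∈ Ioo t₁ t₂, HasDerivAt w 0 x := by
    intro x hx
    have hxab : x ∈ Icc a b := hsub (Ioo_subset_Icc_self hx)
    have hv : φ₂ x ≠ 0 := hcon x (Ioo_subset_Icc_self hx)
    have hd := (hφ₁d x hxab).div (hφ₂d x hxab) hv
    have hnum : φ₁' x * φ₂ x - φ₁ x * φ₂' x = 0 := by have := hr x hx; linarith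
    rw [show (0:ℝ) = (φ₁' x * φ₂ x - φ₁ x * φ₂' x) / φ₂ x ^ 2 by rw [hnum, zero_div]]
    exact hd
  -- w is constant on (t₁, m]; with w(t₁) = 0 and continuity, w m = 0
  set m : ℝ := (t₁ + t₂) / 2 with hmdef
  have hmIoo : m ∈ Ioo t₁ t₂ := ⟨by simp only [hmdef]; linarith, by simp only [hmdef]; linarith⟩
  have hconst : ∀ x ∈ Ioo t₁ m, w x = w m := by
    intro x hx
    have hsub2 : Icc x m ⊆ Ioo t₁ t₂ := fun y hy => ⟨lt_of_lt_of_le hx.1 hy.1,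
      lt_of_le_of_lt hy.2 hmIoo.2⟩
    have hc : ContinuousOn w (Icc x m) := fun y hy =>
      ((hw y (hsub2 hy)).continuousAt).continuousWithinAt
    have hder : ∀ y ∈ Ico x m, HasDerivWithinAt w 0 (Ici y) y := fun y hy =>
      (hw y (hsub2 ⟨hy.1, hy.2.le⟩)).hasDerivWithinAt
    have := constant_of_has_deriv_right_zero hc hder m (right_mem_Icc.2 hx.2.le)
    linarith [this]
  have hvt₁ : φ₂ t₁ ≠ 0 := hcon t₁ (left_mem_Icc.2 h₁₂.le)
  have hwcont : ContinuousAt w t₁ :=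
    ((hφ₁d t₁ ht₁).continuousAt).div ((hφ₂d t₁ ht₁).continuousAt) hvt₁
  have hne : (𝓝[>] t₁).NeBot := nhdsGT_neBot t₁
  have htend1 : Tendsto w (𝓝[>] t₁) (𝓝 (w t₁)) :=
    hwcont.continuousWithinAt.tendsto
  have htend2 : Tendsto w (𝓝[>] t₁) (𝓝 (w m)) := by
    apply Tendsto.congr' _ tendsto_const_nhds
    filter_upwards [Ioo_mem_nhdsGT_of_mem ⟨le_refl t₁, hmIoo.1⟩] with y hy
    exact (hconst y hy).symm
  have hwm : w t₁ = w m := tendsto_nhds_unique htend1 htend2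
  have hwt1 : w t₁ = 0 := by simp [hwdef, hz₁]
  have : φ₁ m = 0 := by
    have : w m = 0 := by rw [← hwm, hwt1]
    have hvm : φ₂ m ≠ 0 := hcon m (Ioo_subset_Icc_self hmIoo)
    simpa [hwdef, div_eq_zero_iff, hvm] using this
  exact hconsec m hmIoo this
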